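/- arXiv:1609.06327 — 4 statements merged into one kernel-verified Lean document; each statement's English description precedes it below -/
import Mathlib

section
/- Every saturated independent set of the conflict graph G_AM2, interpreted as an activity set by taking the candidates in the independent set as activity intervals, is a valid activity set of the temporal labeling instance satisfying activity model AM2. -/
noncomputable section

/-- A temporal labeling instance `(L, Ψ, C)`: a finite set `L` of labels with positive
weights, for each label a finite set `P ℓ` of pairwise disjoint closed presence intervals
(encoded as pairs `(a,b)` with `a ≤ b`, standing for `[a,b] ⊆ ℝ`), and for each pair of
distinct labels a finite set `C ℓ ℓ'` of closed conflict intervals, each contained in some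
presence interval of `ℓ` (and, by symmetry of `C`, of `ℓ'`). -/
structure TLInstance (L : Type) [Fintype L] [DecidableEq L] where
  w : L → ℝ
  w_pos : ∀ ℓ, 0 < w ℓ
  P : L → Finset (ℝ × ℝ)
  P_wf : ∀ ℓ, ∀ p ∈ P ℓ, p.1 ≤ p.2
  P_disj : ∀ ℓ, ∀ p ∈ P ℓ, ∀ q ∈ P ℓ, p ≠ q →
    Disjoint (Set.Icc p.1 p.2) (Set.Icc q.1 q.2)
  C : L → L → Finset (ℝ × ℝ)
  C_symm : ∀ ℓ ℓ', C ℓ ℓ' = C ℓ' ℓ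
  C_self : ∀ ℓ, C ℓ ℓ = ∅
  C_wf : ∀ ℓ ℓ', ∀ c ∈ C ℓ ℓ', c.1 ≤ c.2
  C_sub : ∀ ℓ ℓ', ∀ c ∈ C ℓ ℓ', ∃ p ∈ P ℓ, p.1 ≤ c.1 ∧ c.2 ≤ p.2

namespace TLInstance

variable {L : Type} [Fintype L] [DecidableEq L] (T : TLInstance L)

/-- Intervals `A` of label `ℓ` and `B` of label `ℓ'` are in conflict: some time `t` in the
intersection of the open intervals `(A.1,A.2) ∩ (B.1,B.2)` lies in a conflict interval of
`ℓ` and `ℓ'`. -/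
def InConflict (ℓ ℓ' : L) (A B : ℝ × ℝ) : Prop :=
  ∃ t : ℝ, A.1 < t ∧ t < A.2 ∧ B.1 < t ∧ t < B.2 ∧
    ∃ d ∈ T.C ℓ ℓ', d.1 ≤ t ∧ t ≤ d.2

/-- An activity set `Φ` (a finite set of closed activity intervals for each label)
is valid: (R1) every activity interval of `ℓ` is contained in some presence interval
of `ℓ`; (R2) each presence interval of `ℓ` contains at most one activity interval of `ℓ`;
(R3) no two activity intervals of distinct labels are in conflict. -/
def Valid (Φ : L → Finset (ℝ × ℝ)) : Prop :=
  (∀ ℓ, ∀ A ∈ Φ ℓ, A.1 ≤ A.2 ∧ ∃ p ∈ T.P ℓ, p.1 ≤ A.1 ∧ A.2 ≤ p.2) ∧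
  (∀ ℓ, ∀ p ∈ T.P ℓ, ∀ A ∈ Φ ℓ, ∀ B ∈ Φ ℓ,
    p.1 ≤ A.1 → A.2 ≤ p.2 → p.1 ≤ B.1 → B.2 ≤ p.2 → A = B) ∧
  (∀ ℓ ℓ', ℓ ≠ ℓ' → ∀ A ∈ Φ ℓ, ∀ B ∈ Φ ℓ', ¬ T.InConflict ℓ ℓ' A B)

/-- Every activity interval `A` of `ℓ`, contained in presence interval `p` of `ℓ`, is
justified: its start equals `p.1` or there is a witness label `ℓ'` with an activity
interval containing `A.1` and a conflict interval of `ℓ` and `ℓ'` with right endpoint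
`A.1`; symmetrically for its end. -/
def Justified (Φ : L → Finset (ℝ × ℝ)) : Prop :=
  ∀ ℓ, ∀ A ∈ Φ ℓ, ∀ p ∈ T.P ℓ, p.1 ≤ A.1 → A.2 ≤ p.2 →
    (A.1 = p.1 ∨ ∃ ℓ', ℓ' ≠ ℓ ∧ (∃ B ∈ Φ ℓ', B.1 ≤ A.1 ∧ A.1 ≤ B.2) ∧
      ∃ d ∈ T.C ℓ ℓ', d.2 = A.1) ∧
    (A.2 = p.2 ∨ ∃ ℓ', ℓ' ≠ ℓ ∧ (∃ B ∈ Φ ℓ', B.1 ≤ A.2 ∧ A.2 ≤ B.2) ∧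
      ∃ d ∈ T.C ℓ ℓ', d.1 = A.2)

/-- Activity model AM3: the activity set is valid and every activity interval is justified. -/
def AM3 (Φ : L → Finset (ℝ × ℝ)) : Prop := T.Valid Φ ∧ T.Justified Φ

/-- Activity model AM2: AM3, and moreover every activity interval of `ℓ` starts at the
left endpoint of the presence interval of `ℓ` containing it. -/
def AM2 (Φ : L → Finset (ℝ × ℝ)) : Prop :=
  T.AM3 Φ ∧ ∀ ℓ, ∀ A ∈ Φ ℓ, ∀ p ∈ T.P ℓ, p.1 ≤ A.1 → A.2 ≤ p.2 → A.1 = p.1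

/-- Activity model AM1: AM3, and moreover every activity interval of `ℓ` equals a presence
interval of `ℓ`. -/
def AM1 (Φ : L → Finset (ℝ × ℝ)) : Prop :=
  T.AM3 Φ ∧ ∀ ℓ, ∀ A ∈ Φ ℓ, A ∈ T.P ℓ

/-- The total weight of an activity set: the sum over all activity intervals `[a,b]` of a
label `ℓ` of `(b - a) * w ℓ`. -/
def weightOf (Φ : L → Finset (ℝ × ℝ)) : ℝ :=
  ∑ ℓ : L, ∑ A ∈ Φ ℓ, (A.2 - A.1) * T.w ℓ

/-- `A = [s,t]` is a candidate of the presence interval `p = [a,b]` of label `ℓ`: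
`[s,t] ⊆ [a,b]`, `s ≤ t`, `s = a` or `s` is the right endpoint of a conflict interval of
`ℓ` contained in `[a,b]`, and `t = b` or `t` is the left endpoint of a conflict interval
of `ℓ` contained in `[a,b]`. -/
def IsCandidate (ℓ : L) (p A : ℝ × ℝ) : Prop :=
  p ∈ T.P ℓ ∧ A.1 ≤ A.2 ∧ p.1 ≤ A.1 ∧ A.2 ≤ p.2 ∧
  (A.1 = p.1 ∨ ∃ ℓ', ∃ d ∈ T.C ℓ ℓ', p.1 ≤ d.1 ∧ d.2 ≤ p.2 ∧ d.2 = A.1) ∧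
  (A.2 = p.2 ∨ ∃ ℓ', ∃ d ∈ T.C ℓ ℓ', p.1 ≤ d.1 ∧ d.2 ≤ p.2 ∧ d.1 = A.2)

/-- The vertices of the conflict graph `G_AM3`: triples (label, presence interval,
candidate interval). -/
abbrev Vtx := {x : L × (ℝ × ℝ) × (ℝ × ℝ) // T.IsCandidate x.1 x.2.1 x.2.2}

/-- Two vertices belong to the same cluster: same label and same presence interval. -/
def SameCluster (u v : T.Vtx) : Prop := u.1.1 = v.1.1 ∧ u.1.2.1 = v.1.2.1

/-- Adjacency in the conflict graph `G_AM3`: two distinct candidates of the same presence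
interval are adjacent, and two candidates of distinct labels are adjacent iff some time in
the intersection of their open intervals lies in a conflict interval of the two labels. -/
def Adj (u v : T.Vtx) : Prop :=
  u ≠ v ∧ (T.SameCluster u v ∨
    (u.1.1 ≠ v.1.1 ∧ T.InConflict u.1.1 v.1.1 u.1.2.2 v.1.2.2))

/-- `I` is an independent set of the conflict graph `G_AM3`. -/
def IsIndep (I : Finset T.Vtx) : Prop := ∀ u ∈ I, ∀ v ∈ I, ¬ T.Adj u v

/-- Total vertex weight of a set of vertices of `G_AM3`; the weight of the vertex of
candidate `[s,t]` of label `ℓ` is `(t - s) * w ℓ`. -/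
def wsum (I : Finset T.Vtx) : ℝ := ∑ v ∈ I, (v.1.2.2.2 - v.1.2.2.1) * T.w v.1.1

/-- `I` is saturated: there are no vertices `v ∈ I` and `v' ∉ I` in the same cluster such
that exchanging `v` for `v'` yields an independent set of strictly larger total weight. -/
def Saturated (I : Finset T.Vtx) : Prop :=
  ¬ ∃ v ∈ I, ∃ v' : T.Vtx, v' ∉ I ∧ T.SameCluster v v' ∧
    T.IsIndep (insert v' (I.erase v)) ∧ T.wsum I < T.wsum (insert v' (I.erase v))

/-- The activity set obtained from a set `I` of vertices of `G_AM3` by taking the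
candidates in `I` as activity intervals. -/
def toActivity (I : Finset T.Vtx) (ℓ : L) : Finset (ℝ × ℝ) :=
  (I.filter (fun v => v.1.1 = ℓ)).image (fun v => v.1.2.2)

end TLInstance

namespace TLInstance

variable {L : Type} [Fintype L] [DecidableEq L] (T : TLInstance L)

/-- Candidates of the conflict graph `G_AM2`: candidates starting at the left endpoint of
their presence interval. -/
def IsCandidate2 (ℓ : L) (p A : ℝ × ℝ) : Prop := T.IsCandidate ℓ p A ∧ A.1 = p.1

/-- The vertices of the conflict graph `G_AM2`. -/
abbrev Vtx2 := {x : L × (ℝ × ℝ) × (ℝ × ℝ) // T.IsCandidate2 x.1 x.2.1 x.2.2}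

/-- Same cluster in `G_AM2`: same label and same presence interval. -/
def SameCluster2 (u v : T.Vtx2) : Prop := u.1.1 = v.1.1 ∧ u.1.2.1 = v.1.2.1

/-- Adjacency in the conflict graph `G_AM2`. -/
def Adj2 (u v : T.Vtx2) : Prop :=
  u ≠ v ∧ (T.SameCluster2 u v ∨
    (u.1.1 ≠ v.1.1 ∧ T.InConflict u.1.1 v.1.1 u.1.2.2 v.1.2.2))

/-- `I` is an independent set of `G_AM2`. -/
def IsIndep2 (I : Finset T.Vtx2) : Prop := ∀ u ∈ I, ∀ v ∈ I, ¬ T.Adj2 u v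

/-- Total vertex weight in `G_AM2`. -/
def wsum2 (I : Finset T.Vtx2) : ℝ := ∑ v ∈ I, (v.1.2.2.2 - v.1.2.2.1) * T.w v.1.1

/-- `I` is a saturated set of vertices of `G_AM2`. -/
def Saturated2 (I : Finset T.Vtx2) : Prop :=
  ¬ ∃ v ∈ I, ∃ v' : T.Vtx2, v' ∉ I ∧ T.SameCluster2 v v' ∧
    T.IsIndep2 (insert v' (I.erase v)) ∧ T.wsum2 I < T.wsum2 (insert v' (I.erase v))

/-- The activity set obtained from a set of vertices of `G_AM2`. -/
def toActivity2 (I : Finset T.Vtx2) (ℓ : L) : Finset (ℝ × ℝ) :=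
  (I.filter (fun v => v.1.1 = ℓ)).image (fun v => v.1.2.2)

end TLInstance

namespace TLInstance

variable {L : Type} [Fintype L] [DecidableEq L] (T : TLInstance L)

lemma presence_eq {ℓ : L} {p q : ℝ × ℝ} (hp : p ∈ T.P ℓ) (hq : q ∈ T.P ℓ)
    {x : ℝ} (h1 : p.1 ≤ x) (h2 : x ≤ p.2) (h3 : q.1 ≤ x) (h4 : x ≤ q.2) : p = q := by
  by_contra h
  exact Set.disjoint_left.1 (T.P_disj ℓ p hp q hq h) ⟨h1, h2⟩ ⟨h3, h4⟩

lemma inConflict_symm {ℓ ℓ' : L} {A B : ℝ × ℝ} (h : T.InConflict ℓ ℓ' A B) :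
    T.InConflict ℓ' ℓ B A := by
  obtain ⟨t, h1, h2, h3, h4, d, hd, hd1, hd2⟩ := h
  exact ⟨t, h3, h4, h1, h2, d, (T.C_symm ℓ ℓ') ▸ hd, hd1, hd2⟩

lemma adj2_symm {u v : T.Vtx2} (h : T.Adj2 u v) : T.Adj2 v u := by
  obtain ⟨hne, h⟩ := h
  refine ⟨hne.symm, ?_⟩
  rcases h with ⟨h1, h2⟩ | ⟨h1, h2⟩
  · exact Or.inl ⟨h1.symm, h2.symm⟩
  · exact Or.inr ⟨h1.symm, T.inConflict_symm h2⟩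

lemma mem_toActivity2 {I : Finset T.Vtx2} {ℓ : L} {A : ℝ × ℝ} :
    A ∈ T.toActivity2 I ℓ ↔ ∃ u ∈ I, u.1.1 = ℓ ∧ u.1.2.2 = A := by
  simp [toActivity2, Finset.mem_image, Finset.mem_filter, and_assoc]

lemma exchange (I : Finset T.Vtx2) (hind : T.IsIndep2 I) (hsat : T.Saturated2 I)
    (u : T.Vtx2) (hu : u ∈ I) (hne : u.1.2.2.2 ≠ u.1.2.1.2) :
    ∃ ℓ', ℓ' ≠ u.1.1 ∧ (∃ B ∈ T.toActivity2 I ℓ', B.1 ≤ u.1.2.2.2 ∧ u.1.2.2.2 ≤ B.2) ∧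
      ∃ d ∈ T.C u.1.1 ℓ', d.1 = u.1.2.2.2 := by
  classical
  by_contra H
  apply hsat
  obtain ⟨⟨ℓ, p, A⟩, hcand⟩ := u
  have hcand' : T.IsCandidate ℓ p A ∧ A.1 = p.1 := hcand
  obtain ⟨⟨hp, hAle, hpA1, hA2p, _, _⟩, hA1⟩ := hcand'
  have hne' : A.2 ≠ p.2 := hne
  set E : Finset ℝ := insert p.2 (((Finset.univ.biUnion (fun ℓ' => T.C ℓ ℓ')).filter
      (fun d => p.1 ≤ d.1 ∧ d.2 ≤ p.2 ∧ A.2 < d.1)).image Prod.fst) with hE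
  have hp2E : p.2 ∈ E := Finset.mem_insert_self _ _
  have hEne : E.Nonempty := ⟨p.2, hp2E⟩
  set t' := E.min' hEne with ht'
  have hA2p2 : A.2 < p.2 := lt_of_le_of_ne hA2p hne'
  have hElt : ∀ x ∈ E, A.2 < x ∧ x ≤ p.2 := by
    intro x hx
    rcases Finset.mem_insert.1 hx with rfl | hx
    · exact ⟨hA2p2, le_refl _⟩
    · obtain ⟨d, hd, rfl⟩ := Finset.mem_image.1 hx
      obtain ⟨hdmem, hh1, hh2, hh3⟩ := Finset.mem_filter.1 hd
      exact ⟨hh3, le_trans (le_trans (by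
        obtain ⟨ℓ'', _, hdC⟩ := Finset.mem_biUnion.1 hdmem
        exact T.C_wf _ _ _ hdC) hh2) (le_refl _)⟩
  have ht'mem := E.min'_mem hEne
  have ht'lt : A.2 < t' := (hElt _ ht'mem).1
  have ht'le : t' ≤ p.2 := (hElt _ ht'mem).2
  have hpA2 : p.1 ≤ A.2 := by rw [← hA1]; exact hAle
  have hcand2 : T.IsCandidate2 ℓ p (p.1, t') := by
    refine ⟨⟨hp, by simp; linarith, le_refl _, ht'le, Or.inl rfl, ?_⟩, rfl⟩
    rcases Finset.mem_insert.1 ht'mem with h | h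
    · exact Or.inl h
    · obtain ⟨d, hd, hdeq⟩ := Finset.mem_image.1 h
      obtain ⟨hdmem, hh1, hh2, hh3⟩ := Finset.mem_filter.1 hd
      obtain ⟨ℓ'', _, hdC⟩ := Finset.mem_biUnion.1 hdmem
      exact Or.inr ⟨ℓ'', d, hdC, hh1, hh2, hdeq⟩
  set uu : T.Vtx2 := ⟨(ℓ, p, A), hcand⟩ with huu
  set v' : T.Vtx2 := ⟨(ℓ, p, (p.1, t')), hcand2⟩ with hv'
  have hv'I : v' ∉ I := by
    intro hmem
    refine hind _ hu _ hmem ⟨?_, Or.inl ⟨rfl, rfl⟩⟩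
    intro h
    exact ht'lt.ne (congrArg (fun z : T.Vtx2 => z.1.2.2.2) h)
  have hkey : ∀ y ∈ I.erase uu, ¬ T.Adj2 v' y := by
    intro y hy hadj
    have hyI : y ∈ I := Finset.mem_of_mem_erase hy
    have hyu : y ≠ uu := Finset.ne_of_mem_erase hy
    obtain ⟨hne2, hadj⟩ := hadj
    obtain ⟨⟨ℓ', q, B⟩, hycand⟩ := y
    have hycand' : T.IsCandidate ℓ' q B ∧ B.1 = q.1 := hycand
    obtain ⟨⟨hq, hBle, hq1, hq2, _, _⟩, hB1q⟩ := hycand'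
    rcases hadj with ⟨hlab, hpres⟩ | ⟨hlab, hconf⟩
    · -- same cluster as v' : label ℓ, presence p
      refine hind _ hu _ hyI ⟨fun h => hyu h.symm, Or.inl ⟨hlab, hpres⟩⟩
    · -- conflict case
      have hlabne : ℓ ≠ ℓ' := hlab
      have hconf' : T.InConflict ℓ ℓ' (p.1, t') B := hconf
      obtain ⟨t, htp1, htt', htB1, htB2, d, hdC, hd1t, htd2⟩ := hconf'
      have huy : uu ≠ (⟨(ℓ', q, B), hycand⟩ : T.Vtx2) :=
        fun h => hlabne (congrArg (fun z : T.Vtx2 => z.1.1) h)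
      have hA1t : A.1 < t := by rw [hA1]; exact htp1
      rcases lt_or_ge t A.2 with hlt | hge
      · exact hind _ hu _ hyI ⟨huy, Or.inr ⟨hlabne,
          t, hA1t, hlt, htB1, htB2, d, hdC, hd1t, htd2⟩⟩
      · obtain ⟨q0, hq0, hq01, hq02⟩ := T.C_sub ℓ ℓ' d hdC
        have hq0p : q0 = p := T.presence_eq hq0 hp (le_trans hq01 hd1t)
          (le_trans htd2 hq02) htp1.le (le_trans htt'.le ht'le)
        have hd1p : p.1 ≤ d.1 := hq0p ▸ hq01
        have hd2p : d.2 ≤ p.2 := hq0p ▸ hq02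
        have hd1A2 : d.1 ≤ A.2 := by
          by_contra hgt
          push_neg at hgt
          have hdE : d.1 ∈ E := by
            rw [hE]
            exact Finset.mem_insert_of_mem (Finset.mem_image_of_mem _
              (Finset.mem_filter.2 ⟨Finset.mem_biUnion.2 ⟨ℓ', Finset.mem_univ _, hdC⟩,
                hd1p, hd2p, hgt⟩))
          have := E.min'_le _ hdE
          rw [← ht'] at this
          linarith
        have hB1d1 : B.1 ≤ d.1 := by
          by_contra hgt
          push_neg at hgt
          obtain ⟨q1, hq1', hq11, hq12⟩ := T.C_sub ℓ' ℓ d (by rw [T.C_symm]; exact hdC)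
          have hq1q : q1 = q := T.presence_eq hq1' hq
            (le_trans hq11 hgt.le) (le_trans (le_trans htB1.le htd2) hq12)
            (le_of_eq hB1q.symm) (le_trans hBle hq2)
          have : q.1 ≤ d.1 := hq1q ▸ hq11
          rw [← hB1q] at this
          linarith
        rcases eq_or_lt_of_le hd1A2 with heq | hltd
        · -- witness exists: contradiction with H
          exact absurd ⟨ℓ', fun h => hlabne h.symm,
            ⟨B, T.mem_toActivity2.2 ⟨_, hyI, rfl, rfl⟩, heq ▸ hB1d1, le_trans hge htB2.le⟩,
            d, hdC, heq⟩ H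
        · -- build a conflict between A and B, contradicting independence
          have hA1A2 : A.1 < A.2 := by rw [hA1]; linarith
          set m := max A.1 (max B.1 d.1) with hm
          have hmlt : m < A.2 := max_lt hA1A2 (max_lt (lt_of_le_of_lt hB1d1 hltd) hltd)
          have hm1 : A.1 ≤ m := le_max_left _ _
          have hm2 : B.1 ≤ m := le_trans (le_max_left _ _) (le_max_right _ _)
          have hm3 : d.1 ≤ m := le_trans (le_max_right _ _) (le_max_right _ _)
          refine hind _ hu _ hyI ⟨huy, Or.inr ⟨hlabne, (m + A.2) / 2,
            by linarith, by linarith, by linarith, by linarith, d, hdC,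
            by linarith, by linarith⟩⟩
  have hindJ : T.IsIndep2 (insert v' (I.erase uu)) := by
    intro x hx y hy hadj
    rcases Finset.mem_insert.1 hx with rfl | hx
    · rcases Finset.mem_insert.1 hy with rfl | hy
      · exact hadj.1 rfl
      · exact hkey y hy hadj
    · rcases Finset.mem_insert.1 hy with rfl | hy
      · exact hkey x hx (T.adj2_symm hadj)
      · exact hind _ (Finset.mem_of_mem_erase hx) _ (Finset.mem_of_mem_erase hy) hadj
  have hni : v' ∉ I.erase uu := fun h => hv'I (Finset.mem_of_mem_erase h)
  have h1 : T.wsum2 (insert v' (I.erase uu)) = (t' - p.1) * T.w ℓ + T.wsum2 (I.erase uu) := by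
    unfold wsum2
    exact Finset.sum_insert hni
  have h2 : T.wsum2 I = (A.2 - A.1) * T.w ℓ + T.wsum2 (I.erase uu) := by
    unfold wsum2
    exact (Finset.add_sum_erase I _ hu).symm
  have hw := T.w_pos ℓ
  have hd : A.2 - A.1 < t' - p.1 := by rw [hA1]; linarith
  have hwlt : T.wsum2 I < T.wsum2 (insert v' (I.erase uu)) := by
    rw [h1, h2]
    have := mul_lt_mul_of_pos_right hd hw
    linarith
  exact ⟨uu, hu, v', hv'I, ⟨rfl, rfl⟩, hindJ, hwlt⟩

end TLInstance

/-- Every saturated independent set of the conflict graph `G_AM2`, interpreted as an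
activity set by taking the candidates in the independent set as activity intervals, is a
valid activity set satisfying activity model AM2. -/
theorem stmt1 {L : Type} [Fintype L] [DecidableEq L] (T : TLInstance L)
    (I : Finset T.Vtx2) (hind : T.IsIndep2 I) (hsat : T.Saturated2 I) :
    T.AM2 (T.toActivity2 I) := by
  classical
  refine ⟨⟨⟨?_, ?_, ?_⟩, ?_⟩, ?_⟩
  · -- R1
    intro ℓ A hA
    obtain ⟨u, huI, hlab, hAeq⟩ := T.mem_toActivity2.1 hA
    subst hAeq; subst hlab
    obtain ⟨⟨hp, hAle, hu1, hu2, _, _⟩, _⟩ := u.2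
    exact ⟨hAle, u.1.2.1, hp, hu1, hu2⟩
  · -- R2
    intro ℓ p hp A hA B hB h1 h2 h3 h4
    obtain ⟨u, huI, hlu, hAu⟩ := T.mem_toActivity2.1 hA
    obtain ⟨v, hvI, hlv, hBv⟩ := T.mem_toActivity2.1 hB
    subst hAu; subst hBv; subst hlu
    obtain ⟨⟨hpu, hAleu, hu1, hu2, _, _⟩, _⟩ := u.2
    obtain ⟨⟨hpv, hAlev, hv1, hv2, _, _⟩, _⟩ := v.2
    rw [hlv] at hpv
    have hup : u.1.2.1 = p := T.presence_eq hpu hp hu1 (le_trans hAleu hu2) h1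
      (le_trans hAleu h2)
    have hvp : v.1.2.1 = p := T.presence_eq hpv hp hv1 (le_trans hAlev hv2) h3
      (le_trans hAlev h4)
    by_contra hneq
    exact hind u huI v hvI ⟨fun h => hneq (congrArg (fun z : T.Vtx2 => z.1.2.2) h),
      Or.inl ⟨hlv.symm, hup.trans hvp.symm⟩⟩
  · -- R3
    intro ℓ ℓ' hne A hA B hB hconf
    obtain ⟨u, huI, hlu, hAu⟩ := T.mem_toActivity2.1 hA
    obtain ⟨v, hvI, hlv, hBv⟩ := T.mem_toActivity2.1 hB
    subst hAu; subst hBv; subst hlu; subst hlv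
    exact hind u huI v hvI ⟨fun h => hne (congrArg (fun z : T.Vtx2 => z.1.1) h),
      Or.inr ⟨hne, hconf⟩⟩
  · -- Justified
    intro ℓ A hA p hp h1 h2
    obtain ⟨u, huI, hlab, hAeq⟩ := T.mem_toActivity2.1 hA
    subst hAeq; subst hlab
    obtain ⟨⟨hpu, hAle, hu1, hu2, _, _⟩, hstart⟩ := u.2
    have hup : u.1.2.1 = p := T.presence_eq hpu hp hu1 (le_trans hAle hu2) h1
      (le_trans hAle h2)
    constructor
    · left; rw [hstart, hup]
    · by_cases hend : u.1.2.2.2 = p.2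
      · exact Or.inl hend
      · exact Or.inr (T.exchange I hind hsat u huI (by rw [hup]; exact hend))
  · -- AM2 start condition
    intro ℓ A hA p hp h1 h2
    obtain ⟨u, huI, hlab, hAeq⟩ := T.mem_toActivity2.1 hA
    subst hAeq; subst hlab
    obtain ⟨⟨hpu, hAle, hu1, hu2, _, _⟩, hstart⟩ := u.2
    have hup : u.1.2.1 = p := T.presence_eq hpu hp hu1 (le_trans hAle hu2) h1
      (le_trans hAle h2)
    rw [hstart, hup]
end
end

section
/- Every saturated independent set of the conflict graph G_AM1, interpreted as an activity set by taking the candidates in the independent set as activity intervals, is a valid activity set of the temporal labeling instance satisfying activity model AM1. -/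
noncomputable section

namespace TLInstance

variable {L : Type} [Fintype L] [DecidableEq L] (T : TLInstance L)

/-- The vertices of the conflict graph `G_AM1`: one vertex (candidate) for each presence
interval `[a,b]` of each label `ℓ`. -/
abbrev Vtx1 := {x : L × (ℝ × ℝ) // x.2 ∈ T.P x.1}

/-- Same cluster in `G_AM1`: belonging to the same presence interval of the same label,
i.e. each cluster is a single vertex. -/
def SameCluster1 (u v : T.Vtx1) : Prop := u.1 = v.1

/-- Adjacency in the conflict graph `G_AM1`: candidates `[s,t]` of `ℓ` and `[s',t']` of
`ℓ' ≠ ℓ` are adjacent iff some time in `(s,t) ∩ (s',t')` lies in a conflict interval of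
`ℓ` and `ℓ'`. -/
def Adj1 (u v : T.Vtx1) : Prop :=
  u.1.1 ≠ v.1.1 ∧ T.InConflict u.1.1 v.1.1 u.1.2 v.1.2

/-- `I` is an independent set of `G_AM1`. -/
def IsIndep1 (I : Finset T.Vtx1) : Prop := ∀ u ∈ I, ∀ v ∈ I, ¬ T.Adj1 u v

/-- Total vertex weight in `G_AM1`: the vertex of presence interval `[a,b]` of `ℓ` has
weight `(b - a) * w ℓ`. -/
def wsum1 (I : Finset T.Vtx1) : ℝ := ∑ v ∈ I, (v.1.2.2 - v.1.2.1) * T.w v.1.1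

/-- `I` is a saturated set of vertices of `G_AM1`. -/
def Saturated1 (I : Finset T.Vtx1) : Prop :=
  ¬ ∃ v ∈ I, ∃ v' : T.Vtx1, v' ∉ I ∧ T.SameCluster1 v v' ∧
    T.IsIndep1 (insert v' (I.erase v)) ∧ T.wsum1 I < T.wsum1 (insert v' (I.erase v))

/-- The activity set obtained from a set of vertices of `G_AM1`. -/
def toActivity1 (I : Finset T.Vtx1) (ℓ : L) : Finset (ℝ × ℝ) :=
  (I.filter (fun v => v.1.1 = ℓ)).image (fun v => v.1.2)

end TLInstance

/-- Every saturated independent set of the conflict graph `G_AM1`, interpreted as an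
activity set by taking the candidates in the independent set as activity intervals, is a
valid activity set satisfying activity model AM1. -/
theorem stmt2 {L : Type} [Fintype L] [DecidableEq L] (T : TLInstance L)
    (I : Finset T.Vtx1) (hind : T.IsIndep1 I) (hsat : T.Saturated1 I) :
    T.AM1 (T.toActivity1 I) := by
  -- membership characterization
  have hmem : ∀ ℓ A, A ∈ T.toActivity1 I ℓ → A ∈ T.P ℓ ∧
      ∃ v ∈ I, v.1.1 = ℓ ∧ v.1.2 = A := by
    intro ℓ A hA
    simp only [TLInstance.toActivity1, Finset.mem_image, Finset.mem_filter] at hA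
    obtain ⟨v, ⟨hvI, hvℓ⟩, hvA⟩ := hA
    refine ⟨?_, v, hvI, hvℓ, hvA⟩
    have := v.2
    rw [hvℓ, hvA] at this
    exact this
  -- if A ∈ P ℓ is contained in p ∈ P ℓ then A = p
  have heq : ∀ ℓ, ∀ A ∈ T.P ℓ, ∀ p ∈ T.P ℓ, p.1 ≤ A.1 → A.2 ≤ p.2 → A = p := by
    intro ℓ A hA p hp h1 h2
    by_contra hne
    have hAle := T.P_wf ℓ A hA
    have hd := T.P_disj ℓ A hA p hp hne
    have : A.1 ∈ Set.Icc A.1 A.2 ∩ Set.Icc p.1 p.2 :=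
      ⟨⟨le_refl _, hAle⟩, h1, le_trans hAle h2⟩
    exact absurd this (by rw [Set.disjoint_iff_inter_eq_empty] at hd; simp [hd])
  constructor
  · constructor
    · refine ⟨?_, ?_, ?_⟩
      · intro ℓ A hA
        obtain ⟨hP, -⟩ := hmem ℓ A hA
        exact ⟨T.P_wf ℓ A hP, A, hP, le_refl _, le_refl _⟩
      · intro ℓ p hp A hA B hB hA1 hA2 hB1 hB2
        obtain ⟨hAP, -⟩ := hmem ℓ A hA
        obtain ⟨hBP, -⟩ := hmem ℓ B hB
        rw [heq ℓ A hAP p hp hA1 hA2, heq ℓ B hBP p hp hB1 hB2]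
      · intro ℓ ℓ' hne A hA B hB hc
        obtain ⟨-, u, huI, huℓ, huA⟩ := hmem ℓ A hA
        obtain ⟨-, v, hvI, hvℓ, hvB⟩ := hmem ℓ' B hB
        exact hind u huI v hvI ⟨by rw [huℓ, hvℓ]; exact hne,
          by rw [huℓ, hvℓ, huA, hvB]; exact hc⟩
    · intro ℓ A hA p hp h1 h2
      obtain ⟨hAP, -⟩ := hmem ℓ A hA
      have hAp := heq ℓ A hAP p hp h1 h2
      exact ⟨Or.inl (by rw [hAp]), Or.inl (by rw [hAp])⟩
  · intro ℓ A hA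
    exact (hmem ℓ A hA).1
end
end

section
/- Every independent set of the conflict graph G_AM3 (not necessarily saturated), interpreted as an activity set by taking the candidates in the independent set as activity intervals, is a valid activity set of the temporal labeling instance, i.e., it satisfies requirements (R1), (R2), and (R3). -/
noncomputable section

/-- Every independent set of the conflict graph `G_AM3` (not necessarily saturated),
interpreted as an activity set by taking the candidates in the independent set as activity
intervals, is a valid activity set, i.e. it satisfies (R1), (R2) and (R3). -/
theorem stmt4 {L : Type} [Fintype L] [DecidableEq L] (T : TLInstance L)
    (I : Finset T.Vtx) (hind : T.IsIndep I) :
    T.Valid (T.toActivity I) := by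
  have hmem : ∀ ℓ A, A ∈ T.toActivity I ℓ ↔
      ∃ v ∈ I, v.1.1 = ℓ ∧ v.1.2.2 = A := by
    intro ℓ A
    simp only [TLInstance.toActivity, Finset.mem_image, Finset.mem_filter]
    constructor
    · rintro ⟨v, ⟨hv, h1⟩, h2⟩; exact ⟨v, hv, h1, h2⟩
    · rintro ⟨v, hv, h1, h2⟩; exact ⟨v, ⟨hv, h1⟩, h2⟩
  refine ⟨?_, ?_, ?_⟩
  · intro ℓ A hA
    rw [hmem] at hA
    obtain ⟨v, hv, h1, h2⟩ := hA
    obtain ⟨hp, hle, ha, hb, _⟩ := v.2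
    subst h1 h2
    exact ⟨hle, v.1.2.1, hp, ha, hb⟩
  · intro ℓ p hp A hA B hB hA1 hA2 hB1 hB2
    rw [hmem] at hA hB
    obtain ⟨u, hu, hu1, hu2⟩ := hA
    obtain ⟨v, hv, hv1, hv2⟩ := hB
    subst hu2 hv2
    -- both u and v have presence interval p
    have hpu : u.1.2.1 = p := by
      obtain ⟨hpu, hle, ha, hb, _⟩ := u.2
      by_contra hne
      have := T.P_disj ℓ u.1.2.1 (hu1 ▸ hpu) p hp hne
      exact Set.disjoint_left.1 this ⟨ha, le_trans hle hb⟩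
        ⟨hA1, le_trans hle hA2⟩
    have hpv : v.1.2.1 = p := by
      obtain ⟨hpv, hle, ha, hb, _⟩ := v.2
      by_contra hne
      have := T.P_disj ℓ v.1.2.1 (hv1 ▸ hpv) p hp hne
      exact Set.disjoint_left.1 this ⟨ha, le_trans hle hb⟩
        ⟨hB1, le_trans hle hB2⟩
    by_cases huv : u = v
    · rw [huv]
    · exact absurd ⟨huv, Or.inl ⟨hu1.trans hv1.symm, hpu.trans hpv.symm⟩⟩
        (hind u hu v hv)
  · intro ℓ ℓ' hne A hA B hB hconf
    rw [hmem] at hA hB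
    obtain ⟨u, hu, hu1, hu2⟩ := hA
    obtain ⟨v, hv, hv1, hv2⟩ := hB
    have huv : u ≠ v := by
      rintro rfl; exact hne (hu1 ▸ hv1)
    exact hind u hu v hv ⟨huv, Or.inr ⟨by rw [hu1, hv1]; exact hne,
      by rw [hu1, hv1, hu2, hv2]; exact hconf⟩⟩
end
end

section
/- If Φ is a valid activity set of a temporal labeling instance satisfying activity model AM3, then every activity interval [s,t] of a label ℓ, contained in a presence interval [a,b] of ℓ, is a candidate of [a,b] (that is, s = a or s is the right endpoint of a conflict interval of ℓ contained in [a,b], and t = b or t is the left endpoint of a conflict interval of ℓ contained in [a,b]); moreover, the set of vertices of the conflict graph G_AM3 corresponding to the activity intervals of Φ is an independent set of G_AM3 whose total vertex weight equals the weight of Φ. -/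
noncomputable section

/-- If `Φ` is a valid activity set satisfying AM3, then every activity interval `[s,t]` of
a label `ℓ`, contained in a presence interval `[a,b]` of `ℓ`, is a candidate of `[a,b]`;
moreover, the set of vertices of `G_AM3` corresponding to the activity intervals of `Φ` is
an independent set of `G_AM3` whose total vertex weight equals the weight of `Φ`. -/
theorem stmt11 {L : Type} [Fintype L] [DecidableEq L] (T : TLInstance L)
    (Φ : L → Finset (ℝ × ℝ)) (h : T.AM3 Φ) :
    (∀ ℓ, ∀ A ∈ Φ ℓ, ∀ p ∈ T.P ℓ, p.1 ≤ A.1 → A.2 ≤ p.2 → T.IsCandidate ℓ p A) ∧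
    ∃ S : Finset T.Vtx, (∀ v : T.Vtx, v ∈ S ↔ v.1.2.2 ∈ Φ v.1.1) ∧
      T.IsIndep S ∧ T.wsum S = T.weightOf Φ := by
  classical
  obtain ⟨⟨hR1, hR2, hR3⟩, hJ⟩ := h
  -- uniqueness of presence interval containing a point
  have puniq : ∀ ℓ (x : ℝ), ∀ p ∈ T.P ℓ, ∀ q ∈ T.P ℓ,
      p.1 ≤ x → x ≤ p.2 → q.1 ≤ x → x ≤ q.2 → p = q := by
    intro ℓ x p hp q hq h1 h2 h3 h4
    by_contra hne
    exact Set.disjoint_left.mp (T.P_disj ℓ p hp q hq hne) ⟨h1, h2⟩ ⟨h3, h4⟩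
  have cand : ∀ ℓ, ∀ A ∈ Φ ℓ, ∀ p ∈ T.P ℓ, p.1 ≤ A.1 → A.2 ≤ p.2 →
      T.IsCandidate ℓ p A := by
    intro ℓ A hA p hp h1 h2
    have hAle : A.1 ≤ A.2 := (hR1 ℓ A hA).1
    obtain ⟨hs, he⟩ := hJ ℓ A hA p hp h1 h2
    refine ⟨hp, hAle, h1, h2, ?_, ?_⟩
    · rcases hs with h0 | ⟨ℓ', _, _, d, hd, hd2⟩
      · exact Or.inl h0
      · obtain ⟨q, hq, hq1, hq2⟩ := T.C_sub ℓ ℓ' d hd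
        have hdwf : d.1 ≤ d.2 := T.C_wf ℓ ℓ' d hd
        have : q = p := puniq ℓ A.1 q hq p hp (hd2 ▸ le_trans hq1 hdwf)
          (hd2 ▸ hq2) h1 (le_trans hAle h2)
        exact Or.inr ⟨ℓ', d, hd, this ▸ hq1, this ▸ hq2, hd2⟩
    · rcases he with h0 | ⟨ℓ', _, _, d, hd, hd1⟩
      · exact Or.inl h0
      · obtain ⟨q, hq, hq1, hq2⟩ := T.C_sub ℓ ℓ' d hd
        have hdwf : d.1 ≤ d.2 := T.C_wf ℓ ℓ' d hd
        have : q = p := puniq ℓ A.2 q hq p hp (hd1 ▸ hq1)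
          (hd1 ▸ le_trans hdwf hq2) (le_trans h1 hAle) h2
        exact Or.inr ⟨ℓ', d, hd, this ▸ hq1, this ▸ hq2, hd1⟩
  refine ⟨cand, ?_⟩
  have hex : ∀ ℓ (A : ℝ × ℝ), A ∈ Φ ℓ → ∃ p, T.IsCandidate ℓ p A := by
    intro ℓ A hA
    obtain ⟨_, p, hp, h1, h2⟩ := hR1 ℓ A hA
    exact ⟨p, cand ℓ A hA p hp h1 h2⟩
  choose f hf using hex
  set g : (ℓ : L) → {x // x ∈ Φ ℓ} → T.Vtx :=
    fun ℓ A => ⟨(ℓ, f ℓ A.1 A.2, A.1), hf ℓ A.1 A.2⟩ with hg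
  set S : Finset T.Vtx :=
    Finset.univ.biUnion (fun ℓ => (Φ ℓ).attach.image (g ℓ)) with hS
  have hmem : ∀ v : T.Vtx, v ∈ S ↔ v.1.2.2 ∈ Φ v.1.1 := by
    intro v
    constructor
    · intro hv
      simp only [hS, Finset.mem_biUnion, Finset.mem_image, Finset.mem_attach,
        true_and, Finset.mem_univ] at hv
      obtain ⟨ℓ, ⟨A, hA⟩, rfl⟩ := hv
      exact hA
    · intro hv
      obtain ⟨hp, hle, h1, h2, _, _⟩ := v.2
      have hfp : f v.1.1 v.1.2.2 hv = v.1.2.1 := by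
        obtain ⟨hq, hqle, hq1, hq2, _, _⟩ := hf v.1.1 v.1.2.2 hv
        exact puniq v.1.1 v.1.2.2.1 _ hq _ hp hq1 (le_trans hqle hq2) h1
          (le_trans hle h2)
      simp only [hS, Finset.mem_biUnion, Finset.mem_univ, Finset.mem_image,
        Finset.mem_attach, true_and]
      refine ⟨v.1.1, ⟨v.1.2.2, hv⟩, ?_⟩
      apply Subtype.ext
      simp only [hg]
      exact Prod.ext rfl (Prod.ext hfp rfl)
  refine ⟨S, hmem, ?_, ?_⟩
  · -- independence
    intro u hu v hv hadj
    obtain ⟨hne, hcase⟩ := hadj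
    have hu' : u.1.2.2 ∈ Φ u.1.1 := (hmem u).mp hu
    have hv' : v.1.2.2 ∈ Φ v.1.1 := (hmem v).mp hv
    rcases hcase with ⟨hl, hpp⟩ | ⟨hl, hconf⟩
    · obtain ⟨hpu, _, hu1, hu2, _, _⟩ := u.2
      obtain ⟨hpv, _, hv1, hv2, _, _⟩ := v.2
      have hvmem : v.1.2.2 ∈ Φ u.1.1 := hl ▸ hv'
      have : u.1.2.2 = v.1.2.2 :=
        hR2 u.1.1 u.1.2.1 hpu u.1.2.2 hu' v.1.2.2 hvmem hu1 hu2
          (hpp ▸ hv1) (hpp ▸ hv2)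
      exact hne (Subtype.ext (Prod.ext hl (Prod.ext hpp this)))
    · exact hR3 u.1.1 v.1.1 hl u.1.2.2 hu' v.1.2.2 hv' hconf
  · -- weight
    have hdisj : ∀ ℓ₁ ∈ (Finset.univ : Finset L), ∀ ℓ₂ ∈ Finset.univ, ℓ₁ ≠ ℓ₂ →
        Disjoint ((Φ ℓ₁).attach.image (g ℓ₁)) ((Φ ℓ₂).attach.image (g ℓ₂)) := by
      intro ℓ₁ _ ℓ₂ _ hne
      rw [Finset.disjoint_left]
      rintro v hv1 hv2
      simp only [Finset.mem_image, Finset.mem_attach, true_and] at hv1 hv2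
      obtain ⟨A, rfl⟩ := hv1
      obtain ⟨B, hB⟩ := hv2
      exact hne (congrArg (fun v => v.1.1) hB.symm)
    rw [hS, TLInstance.wsum, Finset.sum_biUnion hdisj, TLInstance.weightOf]
    refine Finset.sum_congr rfl (fun ℓ _ => ?_)
    rw [Finset.sum_image (by
      intro A _ B _ hAB
      have : A.1 = B.1 := congrArg (fun v => v.1.2.2) hAB
      exact Subtype.ext this)]
    rw [← Finset.sum_attach (Φ ℓ) (fun A => (A.2 - A.1) * T.w ℓ)]
end
end
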